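/- arXiv:1909.10211 — 9 statements merged into one kernel-verified Lean document; each statement's English description precedes it below -/
import Mathlib

section
/- Let X be a set on which every pair of equivalence relations permutes (R ∘ S = S ∘ R for all equivalence relations R, S on X, where the composite of equivalence relations is again an equivalence relation equal to their join). If the Triangular Lemma holds for all equivalence relations on X (i.e., R ∩ S ≤ T implies R ∩ (T ∘ S) ≤ T), then the Trapezoid Lemma holds for all equivalence relations on X (i.e., R ∩ S ≤ T implies R ∩ (S ∘ T ∘ S) ≤ T). -/
/-- `Comp B A` relates `x` to `z` iff there is `y` with `x A y` and `y B z`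
(the composite `B ∘ A`: apply `A` first, then `B`). -/
def Comp {X : Type*} (B A : X → X → Prop) : X → X → Prop :=
  fun x z => ∃ y, A x y ∧ B y z

/-- On a set where equivalence relations permute, the Triangular Lemma
(for all equivalence relations) implies the Trapezoid Lemma. -/
theorem trapezoid_of_triangular_permutable {X : Type*}
    (hPerm : ∀ R S : X → X → Prop, Equivalence R → Equivalence S →
      Comp R S = Comp S R)
    (hTL : ∀ R S T : X → X → Prop, Equivalence R → Equivalence S → Equivalence T →
      (∀ x y, R x y → S x y → T x y) →
      ∀ u v, R u v → Comp S T u v → T u v) :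
    ∀ R S T : X → X → Prop, Equivalence R → Equivalence S → Equivalence T →
      (∀ x y, R x y → S x y → T x y) →
      ∀ u v, R u v → Comp S (Comp T S) u v → T u v := by
  intro R S T hR hS hT hRS u v hRuv hComp
  obtain ⟨y, hTSuy, hSyv⟩ := hComp
  rw [hPerm T S hT hS] at hTSuy
  obtain ⟨w, hTuw, hSwy⟩ := hTSuy
  exact hTL R S T hR hS hT hRS u v hRuv ⟨w, hTuw, hS.trans hSwy hSyv⟩
end

section
/- Let X be a set on which every pair of equivalence relations permutes, so that the join of equivalence relations R and S equals their composite R ∘ S. If the Trapezoid Lemma holds for all triples of equivalence relations on X, then the lattice of equivalence relations on X is distributive. -/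
/-- The composite of two permuting equivalence relations is an equivalence relation. -/
theorem comp_equivalence {X : Type*} (A B : X → X → Prop)
    (hA : Equivalence A) (hB : Equivalence B) (hcomm : Comp A B = Comp B A) :
    Equivalence (Comp A B) := by
  constructor
  · exact fun x => ⟨x, hB.refl x, hA.refl x⟩
  · rintro x z ⟨y, hBxy, hAyz⟩
    have : Comp B A z x := ⟨y, hA.symm hAyz, hB.symm hBxy⟩
    rw [hcomm]; exact this
  · rintro x z w ⟨y, hBxy, hAyz⟩ ⟨y', hBzy', hAy'w⟩
    have h1 : Comp B A y y' := ⟨z, hAyz, hBzy'⟩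
    rw [← hcomm] at h1
    obtain ⟨c, hByc, hAcy'⟩ := h1
    exact ⟨c, hB.trans hBxy hByc, hA.trans hAcy' hAy'w⟩

/-- On a set where equivalence relations permute (so the join of two equivalence
relations is their composite), the Trapezoid Lemma implies that the lattice of
equivalence relations is distributive: `R ∩ (S ∨ T) = (R ∩ S) ∨ (R ∩ T)`,
where joins are composites. -/
theorem distrib_of_trapezoid_permutable {X : Type*}
    (hPerm : ∀ R S : X → X → Prop, Equivalence R → Equivalence S →
      Comp R S = Comp S R)
    (hTpL : ∀ R S T : X → X → Prop, Equivalence R → Equivalence S → Equivalence T →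
      (∀ x y, R x y → S x y → T x y) →
      ∀ u v, R u v → Comp S (Comp T S) u v → T u v) :
    ∀ R S T : X → X → Prop, Equivalence R → Equivalence S → Equivalence T →
      ∀ x y, (R x y ∧ Comp T S x y) ↔
        Comp (fun a b => R a b ∧ T a b) (fun a b => R a b ∧ S a b) x y := by
  intro R S T hR hS hT x y
  set RS : X → X → Prop := fun a b => R a b ∧ S a b with hRSdef
  set RT : X → X → Prop := fun a b => R a b ∧ T a b with hRTdef
  have hRS : Equivalence RS :=
    ⟨fun a => ⟨hR.refl a, hS.refl a⟩, fun h => ⟨hR.symm h.1, hS.symm h.2⟩,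
      fun h h' => ⟨hR.trans h.1 h'.1, hS.trans h.2 h'.2⟩⟩
  have hRT : Equivalence RT :=
    ⟨fun a => ⟨hR.refl a, hT.refl a⟩, fun h => ⟨hR.symm h.1, hT.symm h.2⟩,
      fun h h' => ⟨hR.trans h.1 h'.1, hT.trans h.2 h'.2⟩⟩
  set P : X → X → Prop := Comp RT RS with hPdef
  have hP : Equivalence P :=
    comp_equivalence RT RS hRT hRS (hPerm RT RS hRT hRS)
  set V : X → X → Prop := Comp P S with hVdef
  have hV : Equivalence V :=
    comp_equivalence P S hP hS (hPerm P S hP hS)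
  constructor
  · rintro ⟨hxy, w, hSxw, hTwy⟩
    -- Step 1 : R ∩ T ≤ V, so by the Trapezoid Lemma R ∩ (T ∘ V ∘ T) ≤ V gives V x y
    have hRTleV : ∀ a b, R a b → T a b → V a b := fun a b hr ht =>
      ⟨a, hS.refl a, a, ⟨hR.refl a, hS.refl a⟩, hr, ht⟩
    have hVxy : V x y :=
      hTpL R T V hR hT hV hRTleV x y hxy
        ⟨w, ⟨x, hT.refl x, w, hSxw, hP.refl w⟩, hTwy⟩
    obtain ⟨a, hSxa, hPay⟩ := hVxy
    -- Step 2 : R ∩ S ≤ P, so by the Trapezoid Lemma R ∩ (S ∘ P ∘ S) ≤ P gives P x y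
    exact hTpL R S P hR hS hP
      (fun a b hr hs => ⟨b, ⟨hr, hs⟩, hR.refl b, hT.refl b⟩) x y hxy
      ⟨y, ⟨a, hSxa, hPay⟩, hS.refl y⟩
  · rintro ⟨m, ⟨hRxm, hSxm⟩, hRmy, hTmy⟩
    exact ⟨hR.trans hRxm hRmy, m, hSxm, hTmy⟩
end

section
/- If the lattice of equivalence relations on a set X is distributive (and equivalence relations on X permute, so joins are composites), then the Trapezoid Lemma holds on X: for equivalence relations R, S, T with R ∩ S ≤ T, one has R ∩ (S ∘ T ∘ S) ≤ T. -/
/-- If equivalence relations on `X` permute (so joins are composites) and the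
lattice of equivalence relations is distributive, then the Trapezoid Lemma holds. -/
theorem trapezoid_of_distrib_permutable {X : Type*}
    (hPerm : ∀ R S : X → X → Prop, Equivalence R → Equivalence S →
      Comp R S = Comp S R)
    (hDist : ∀ R S T : X → X → Prop, Equivalence R → Equivalence S → Equivalence T →
      ∀ x y, (R x y ∧ Comp T S x y) ↔
        Comp (fun a b => R a b ∧ T a b) (fun a b => R a b ∧ S a b) x y) :
    ∀ R S T : X → X → Prop, Equivalence R → Equivalence S → Equivalence T →
      (∀ x y, R x y → S x y → T x y) →
      ∀ u v, R u v → Comp S (Comp T S) u v → T u v := by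
  intro R S T hR hS hT hRS u v hRuv hComp
  obtain ⟨y, ⟨w, hSuw, hTwy⟩, hSyv⟩ := hComp
  -- from w T y, y S v: Comp S T w v, hence Comp T S w v
  have h1 : Comp S T w v := ⟨y, hTwy, hSyv⟩
  have h2 : Comp T S w v := by rw [hPerm S T hS hT] at h1; exact h1
  obtain ⟨z, hSwz, hTzv⟩ := h2
  have h3 : Comp T S u v := ⟨z, hS.trans hSuw hSwz, hTzv⟩
  obtain ⟨m, ⟨hRum, hSum⟩, ⟨hRmv, hTmv⟩⟩ := (hDist R S T hR hS hT u v).mp ⟨hRuv, h3⟩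
  exact hT.trans (hRS u m hRum hSum) hTmv
end

section
/- Let X be a set such that for all equivalence relations R, S on X, R ∘ S ∘ R = S ∘ R ∘ S and this composite is the join R ∨ S in the lattice of equivalence relations on X. If the Trapezoid Lemma holds for all equivalence relations on X, then the lattice of equivalence relations on X is distributive. -/
/-- `Join3 A B` is the relation `A ∘ B ∘ A` (apply `A`, then `B`, then `A`). -/
def Join3 {X : Type*} (A B : X → X → Prop) : X → X → Prop :=
  Comp A (Comp B A)

theorem inter_equiv {X : Type*} {R S : X → X → Prop} (hR : Equivalence R)
    (hS : Equivalence S) : Equivalence (fun a b => R a b ∧ S a b) :=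
  ⟨fun x => ⟨hR.refl x, hS.refl x⟩,
   fun h => ⟨hR.symm h.1, hS.symm h.2⟩,
   fun h h' => ⟨hR.trans h.1 h'.1, hS.trans h.2 h'.2⟩⟩

/-- If equivalence relations on `X` are 3-permutable (`R∘S∘R = S∘R∘S`, giving the
join), then the Trapezoid Lemma implies distributivity of the lattice of
equivalence relations: `R ∩ (S ∨ T) = (R ∩ S) ∨ (R ∩ T)` with joins given by the
3-fold composites. -/
theorem distrib_of_trapezoid_threePermutable {X : Type*}
    (h3Perm : ∀ R S : X → X → Prop, Equivalence R → Equivalence S →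
      Join3 R S = Join3 S R)
    (hJoinEquiv : ∀ R S : X → X → Prop, Equivalence R → Equivalence S →
      Equivalence (Join3 R S))
    (hTpL : ∀ R S T : X → X → Prop, Equivalence R → Equivalence S → Equivalence T →
      (∀ x y, R x y → S x y → T x y) →
      ∀ u v, R u v → Comp S (Comp T S) u v → T u v) :
    ∀ R S T : X → X → Prop, Equivalence R → Equivalence S → Equivalence T →
      ∀ x y, (R x y ∧ Join3 S T x y) ↔
        Join3 (fun a b => R a b ∧ S a b) (fun a b => R a b ∧ T a b) x y := by
  intro R S T hR hS hT x y
  set RS : X → X → Prop := fun a b => R a b ∧ S a b with hRSdef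
  set RT : X → X → Prop := fun a b => R a b ∧ T a b with hRTdef
  have hRS : Equivalence RS := inter_equiv hR hS
  have hRT : Equivalence RT := inter_equiv hR hT
  constructor
  · rintro ⟨hrxy, a, ⟨b, hxb, hba⟩, hay⟩
    -- Step 1: T₁ = Join3 T RS
    have hT1 : Equivalence (Join3 T RS) := hJoinEquiv T RS hT hRS
    have step1 : Join3 T RS x y := by
      refine hTpL R S (Join3 T RS) hR hS hT1 ?_ x y hrxy ?_
      · intro u v hru hsv
        exact ⟨v, ⟨u, hT.refl u, ⟨hru, hsv⟩⟩, hT.refl v⟩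
      · exact ⟨a, ⟨b, hxb, ⟨a, ⟨a, hba, hRS.refl a⟩, hT.refl a⟩⟩, hay⟩
    -- Step 2: T₂ = Join3 RT RS
    have hT2 : Equivalence (Join3 RT RS) := hJoinEquiv RT RS hRT hRS
    have step2 : Join3 RT RS x y := by
      refine hTpL R T (Join3 RT RS) hR hT hT2 ?_ x y hrxy ?_
      · intro u v hru htv
        exact ⟨u, ⟨u, hRT.refl u, hRS.refl u⟩, ⟨hru, htv⟩⟩
      · obtain ⟨c, ⟨d, hxd, hdc⟩, hcy⟩ := step1
        exact ⟨c, ⟨d, hxd, ⟨c, ⟨d, hRT.refl d, hdc⟩, hRT.refl c⟩⟩, hcy⟩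
    have := h3Perm RS RT hRS hRT
    rw [this]
    exact step2
  · rintro ⟨a, ⟨b, ⟨hrxb, hsxb⟩, ⟨hrba, htba⟩⟩, ⟨hray, hsay⟩⟩
    exact ⟨hR.trans (hR.trans hrxb hrba) hray, a, ⟨b, hsxb, htba⟩, hsay⟩
end

section
/- Let X be an algebra (a type with operations) equipped with two quaternary operations p and q satisfying p(x,y,y,z) = x, p(u,u,v,v) = q(u,u,v,v), and q(x,y,y,z) = z for all elements. If all congruences on X satisfy the Triangular Lemma, then all congruences on X satisfy the Trapezoid Lemma. -/
/-- An equivalence relation `E` is compatible with a quaternary operation `f`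
when `f` preserves `E` componentwise. -/
def IsCompat4 {X : Type*} (f : X → X → X → X → X) (E : X → X → Prop) : Prop :=
  ∀ a a' b b' c c' d d', E a a' → E b b' → E c c' → E d d' →
    E (f a b c d) (f a' b' c' d')

/-- For an algebra with quaternary operations `p, q` satisfying
`p x y y z = x`, `p u u v v = q u u v v`, `q x y y z = z`
(i.e. a 3-permutable algebra): if all congruences satisfy the Triangular Lemma
(and the Shifting Lemma, which follows from 3-permutability), then all
congruences satisfy the Trapezoid Lemma. -/
theorem trapezoid_of_triangular_quaternary {X : Type*} (p q : X → X → X → X → X)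
    (hp : ∀ x y z, p x y y z = x)
    (hpq : ∀ u v, p u u v v = q u u v v)
    (hq : ∀ x y z, q x y y z = z)
    (hTL : ∀ R S T : X → X → Prop,
      Equivalence R → Equivalence S → Equivalence T →
      IsCompat4 p R → IsCompat4 q R → IsCompat4 p S → IsCompat4 q S →
      IsCompat4 p T → IsCompat4 q T →
      (∀ x y, R x y → S x y → T x y) →
      ∀ u y v, T u y → S y v → R u v → T u v)
    (hSL : ∀ R S T : X → X → Prop,
      Equivalence R → Equivalence S → Equivalence T →
      IsCompat4 p R → IsCompat4 q R → IsCompat4 p S → IsCompat4 q S →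
      IsCompat4 p T → IsCompat4 q T →
      (∀ x y, R x y → S x y → T x y) →
      ∀ x y u v, R x y → T x y → S x u → S y v → R u v → T u v) :
    ∀ R S T : X → X → Prop,
      Equivalence R → Equivalence S → Equivalence T →
      IsCompat4 p R → IsCompat4 q R → IsCompat4 p S → IsCompat4 q S →
      IsCompat4 p T → IsCompat4 q T →
      (∀ x y, R x y → S x y → T x y) →
      ∀ x y u v, T x y → S x u → S y v → R u v → T u v := by
  intro R S T hR hS hT hpR hqR hpS hqS hpT hqT hRS x y u v hTxy hSxu hSyv hRuv
  -- Auxiliary elements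
  set z := p u x y v with hz
  set w := q u x y v with hw
  set m := p u u v v with hm
  -- T u z : since u = p u x x v and T x y
  have hTuz : T u z := by
    have := hpT u u x x x y v v (hT.refl u) (hT.refl x) hTxy (hT.refl v)
    rwa [hp u x v] at this
  -- S z m : since S x u and S y v
  have hSzm : S z m := hpS u u x u y v v v (hS.refl u) hSxu hSyv (hS.refl v)
  -- R u m : since u = p u u u u and R u v
  have hRum : R u m := by
    have := hpR u u u u u v u v (hR.refl u) (hR.refl u) hRuv hRuv
    rwa [hp u u u] at this
  -- Triangular lemma gives T u m
  have hTum : T u m := hTL R S T hR hS hT hpR hqR hpS hqS hpT hqT hRS u z m hTuz hSzm hRum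
  -- T v w : since v = q u x x v and T x y
  have hTvw : T v w := by
    have := hqT u u x x x y v v (hT.refl u) (hT.refl x) hTxy (hT.refl v)
    rwa [hq u x v] at this
  -- S w m : since S x u, S y v and m = q u u v v
  have hSwm : S w m := by
    have := hqS u u x u y v v v (hS.refl u) hSxu hSyv (hS.refl v)
    rwa [← hpq u v] at this
  -- R v m : since v = q v v v v and R u v
  have hRvm : R v m := by
    have := hqR v u v u v v v v (hR.symm hRuv) (hR.symm hRuv) (hR.refl v) (hR.refl v)
    rw [hq v v v] at this
    rwa [← hpq u v] at this
  -- Triangular lemma gives T v m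
  have hTvm : T v m := hTL R S T hR hS hT hpR hqR hpS hqS hpT hqT hRS v w m hTvw hSwm hRvm
  exact hT.trans hTum (hT.symm hTvm)
end

section
/- Let X be a set with a ternary operation m satisfying the majority identities m(x,x,y) = x, m(x,y,x) = x, m(y,x,x) = x. Then for all congruences (equivalence relations compatible with m) R, S, T on X: R ∩ (S ∘ T) ≤ (R ∩ S) ∘ (R ∩ T). -/
/-- A congruence on `(X, m)` for a ternary operation `m`: an equivalence relation
compatible with `m`. -/
def IsCong3 {X : Type*} (m : X → X → X → X) (E : X → X → Prop) : Prop :=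
  Equivalence E ∧
    ∀ a a' b b' c c', E a a' → E b b' → E c c' → E (m a b c) (m a' b' c')

/-- For an algebra with a majority operation `m`, all congruences satisfy
`R ∩ (S ∘ T) ≤ (R ∩ S) ∘ (R ∩ T)`. -/
theorem majority_inequality {X : Type*} (m : X → X → X → X)
    (h1 : ∀ x y, m x x y = x) (h2 : ∀ x y, m x y x = x) (h3 : ∀ x y, m y x x = x)
    (R S T : X → X → Prop)
    (hR : IsCong3 m R) (hS : IsCong3 m S) (hT : IsCong3 m T) :
    ∀ x z, R x z → (∃ y, T x y ∧ S y z) →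
      ∃ y, (R x y ∧ T x y) ∧ (R y z ∧ S y z) := by
  rintro x z hxz ⟨y, hT1, hS1⟩
  refine ⟨m x y z, ⟨?_, ?_⟩, ?_, ?_⟩
  · have := hR.2 x x y y x z (hR.1.refl x) (hR.1.refl y) hxz
    rwa [h2] at this
  · have := hT.2 x x x y z z (hT.1.refl x) hT1 (hT.1.refl z)
    rwa [h1] at this
  · have := hR.2 x z y y z z hxz (hR.1.refl y) (hR.1.refl z)
    rwa [h2] at this
  · have := hS.2 x x y z z z (hS.1.refl x) hS1 (hS.1.refl z)
    rwa [h3] at this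
end

section
/- Let X be a set with a ternary majority operation m (satisfying m(x,x,y) = m(x,y,x) = m(y,x,x) = x). Then the Trapezoid Lemma holds for congruences on X: if R, S, T are congruences with R ∩ S ≤ T, then R ∩ (S ∘ T ∘ S) ≤ T. -/
/-- For an algebra with a majority operation `m`, the Trapezoid Lemma holds for
congruences: if `R ∩ S ≤ T`, `(x,y) ∈ T`, `(x,u) ∈ S`, `(y,v) ∈ S` and
`(u,v) ∈ R`, then `(u,v) ∈ T`. -/
theorem trapezoid_of_majority_op {X : Type*} (m : X → X → X → X)
    (h1 : ∀ x y, m x x y = x) (h2 : ∀ x y, m x y x = x) (h3 : ∀ x y, m y x x = x)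
    (R S T : X → X → Prop)
    (hR : IsCong3 m R) (hS : IsCong3 m S) (hT : IsCong3 m T)
    (hRST : ∀ a b, R a b → S a b → T a b) :
    ∀ x y u v, T x y → S x u → S y v → R u v → T u v := by
  obtain ⟨⟨Rrefl, Rsymm, Rtrans⟩, Rc⟩ := hR
  obtain ⟨⟨Srefl, Ssymm, Strans⟩, Sc⟩ := hS
  obtain ⟨⟨Trefl, Tsymm, Ttrans⟩, Tc⟩ := hT
  intro x y u v hTxy hSxu hSyv hRuv
  set a := m x u v with ha
  set b := m y u v with hb
  have hSau : S a u := by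
    have := Sc x u u u v v hSxu (Srefl u) (Srefl v)
    rwa [h1] at this
  have hSbv : S b v := by
    have := Sc y v u u v v hSyv (Srefl u) (Srefl v)
    rwa [h2] at this
  have hRau : R a u := by
    have := Rc x x u u v u (Rrefl x) (Rrefl u) (Rsymm hRuv)
    rwa [h3] at this
  have hRbv : R b v := by
    have := Rc y y u v v v (Rrefl y) hRuv (Rrefl v)
    rwa [h3] at this
  have hTab : T a b := Tc x y u u v v hTxy (Trefl u) (Trefl v)
  have hTua : T u a := Tsymm (hRST a u hRau hSau)
  have hTbv : T b v := hRST b v hRbv hSbv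
  exact Ttrans hTua (Ttrans hTab hTbv)
end

section
/- Let X be a set with quaternary operations p, q satisfying p(x,y,y,z) = x, p(u,u,v,v) = q(u,u,v,v), q(x,y,y,z) = z. Then congruences on X 3-permute: R ∘ S ∘ R = S ∘ R ∘ S for all congruences R, S on X. -/
/-- A congruence on `X` for quaternary operations: an equivalence relation
compatible with the operation componentwise. -/
def IsCong4 {X : Type*} (f : X → X → X → X → X) (E : X → X → Prop) : Prop :=
  Equivalence E ∧
    ∀ a a' b b' c c' d d', E a a' → E b b' → E c c' → E d d' →
      E (f a b c d) (f a' b' c' d')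

lemma three_permute_aux {X : Type*} (p q : X → X → X → X → X)
    (hp : ∀ x y z, p x y y z = x)
    (hpq : ∀ u v, p u u v v = q u u v v)
    (hq : ∀ x y z, q x y y z = z)
    (R S : X → X → Prop)
    (hRp : IsCong4 p R) (hRq : IsCong4 q R)
    (hSp : IsCong4 p S) (hSq : IsCong4 q S) :
    ∀ x z, (∃ a b, R x a ∧ S a b ∧ R b z) → (∃ a b, S x a ∧ R a b ∧ S b z) := by
  rintro x z ⟨a, b, hxa, hab, hbz⟩
  refine ⟨p x a b z, q x a b z, ?_, ?_, ?_⟩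
  · have h := hSp.2 x x a a a b z z (hSp.1.refl x) (hSp.1.refl a) hab (hSp.1.refl z)
    rwa [hp] at h
  · have h1 := hRp.2 x a a a b b z b hxa (hRp.1.refl a) (hRp.1.refl b) (hRp.1.symm hbz)
    have h2 := hRq.2 a x a a b b b z (hRq.1.symm hxa) (hRq.1.refl a) (hRq.1.refl b) hbz
    rw [hpq] at h1
    exact hRp.1.trans h1 h2
  · have h := hSq.2 x x a b b b z z (hSq.1.refl x) hab (hSq.1.refl b) (hSq.1.refl z)
    rwa [hq] at h

/-- For an algebra with quaternary operations `p, q` satisfying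
`p x y y z = x`, `p u u v v = q u u v v`, `q x y y z = z`,
congruences 3-permute: `R ∘ S ∘ R = S ∘ R ∘ S`. -/
theorem congruences_three_permute {X : Type*} (p q : X → X → X → X → X)
    (hp : ∀ x y z, p x y y z = x)
    (hpq : ∀ u v, p u u v v = q u u v v)
    (hq : ∀ x y z, q x y y z = z)
    (R S : X → X → Prop)
    (hRp : IsCong4 p R) (hRq : IsCong4 q R)
    (hSp : IsCong4 p S) (hSq : IsCong4 q S) :
    ∀ x z, (∃ a b, R x a ∧ S a b ∧ R b z) ↔ (∃ a b, S x a ∧ R a b ∧ S b z) := by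
  intro x z
  exact ⟨three_permute_aux p q hp hpq hq R S hRp hRq hSp hSq x z,
    three_permute_aux p q hp hpq hq S R hSp hSq hRp hRq x z⟩
end

section
/- Let X be a set on which every reflexive and positive relation is an equivalence relation, where positive means of the form P⁻¹ ∘ P. Suppose the Triangular Lemma holds on X whenever S is reflexive and R, T are reflexive and positive relations. Then every reflexive relation E on X satisfies E ∘ E⁻¹ ≤ E⁻¹ ∘ E. -/
/-- A relation `E` on `X` is positive when `E = P⁻¹ ∘ P` for some relation
`P` from `X` to some set `Y`. -/
def IsPositive {X : Type} (E : X → X → Prop) : Prop :=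
  ∃ (Y : Type) (P : X → Y → Prop), ∀ x x', E x x' ↔ ∃ y, P x y ∧ P x' y

/-- Suppose every reflexive positive relation on `X` is an equivalence relation,
and the Triangular Lemma holds on `X` whenever `S` is reflexive and `R, T` are
reflexive and positive. Then every reflexive relation `E` on `X` satisfies
`E ∘ E⁻¹ ≤ E⁻¹ ∘ E`. -/
theorem goursat_of_triangular_positive {X : Type}
    (hPos : ∀ E : X → X → Prop, Reflexive E → IsPositive E → Equivalence E)
    (hTL : ∀ R S T : X → X → Prop,
      Reflexive S → Reflexive R → IsPositive R → Reflexive T → IsPositive T →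
      (∀ x y, R x y → S x y → T x y) →
      ∀ x z y, T x z → S z y → R x y → T x y) :
    ∀ E : X → X → Prop, Reflexive E →
      ∀ x y, (∃ z, E z x ∧ E z y) → (∃ z, E x z ∧ E y z) := by
  intro E hE x y ⟨z, hzx, hzy⟩
  set R : X → X → Prop := fun a b => ∃ w, E w a ∧ E w b with hR
  set T : X → X → Prop := fun a b => ∃ w, E a w ∧ E b w with hT
  have hRrefl : Reflexive R := fun a => ⟨a, hE a, hE a⟩
  have hTrefl : Reflexive T := fun a => ⟨a, hE a, hE a⟩
  have hRpos : IsPositive R := ⟨X, fun a w => E w a, fun a b => Iff.rfl⟩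
  have hTpos : IsPositive T := ⟨X, fun a w => E a w, fun a b => Iff.rfl⟩
  have hRS : ∀ a b, R a b → E a b → T a b := fun a b _ hab => ⟨b, hab, hE b⟩
  exact hTL R E T hE hRrefl hRpos hTrefl hTpos hRS x z y ⟨x, hE x, hzx⟩ hzy ⟨z, hzx, hzy⟩
end
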